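/- Let T be a tree rooted at r with link set E, let v ∈ V, and suppose the subtree T_v is minimally leaf-closed and every leaf in L_v is incident to at least one link of E. Then the set of up-links {up(a) : a ∈ L_v} covers every edge of T_v. -/

import Mathlib

open scoped Classical

/-- The set of tree edges lying on a path (necessarily the unique one in a tree)
between `u` and `v`. -/
def pathEdges {V : Type*} (T : SimpleGraph V) (u v : V) : Set (Sym2 V) :=
  {e | ∃ p : T.Walk u v, p.IsPath ∧ e ∈ p.edges}

/-- The set of vertices lying on a path between `u` and `v`. -/
def pathSupport {V : Type*} (T : SimpleGraph V) (u v : V) : Set V :=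
  {w | ∃ p : T.Walk u v, p.IsPath ∧ w ∈ p.support}

/-- The link `l` covers the tree edge `e` : `e` lies on the tree path between the
endpoints of `l`. -/
def Covers {V : Type*} (T : SimpleGraph V) (l e : Sym2 V) : Prop :=
  ∃ u v, l = s(u, v) ∧ e ∈ pathEdges T u v

/-- A set `F` of links covers the tree `T` (is feasible): every edge of `T` is covered
by some link of `F`. -/
def CoversTree {V : Type*} (T : SimpleGraph V) (F : Set (Sym2 V)) : Prop :=
  ∀ e ∈ T.edgeSet, ∃ l ∈ F, Covers T l e

/-- `x` belongs to the subtree `T_v` of `T` rooted at `r`: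
`v` lies on the tree path from `x` to the root `r`. -/
def InSubtree {V : Type*} (T : SimpleGraph V) (r v x : V) : Prop :=
  v ∈ pathSupport T x r

/-- A leaf is a vertex with exactly one neighbour (degree one). -/
def IsLeaf {V : Type*} (T : SimpleGraph V) (v : V) : Prop :=
  ∃! w, T.Adj v w

/-- `y` is the parent of `x` in the tree `T` rooted at `r`. -/
def IsParent {V : Type*} (T : SimpleGraph V) (r x y : V) : Prop :=
  T.Adj x y ∧ InSubtree T r y x

/-- `w` is the least common ancestor of `u` and `v` in the tree `T` rooted at `r`. -/
def IsLCA {V : Type*} (T : SimpleGraph V) (r u v w : V) : Prop :=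
  w ∈ pathSupport T u v ∧ w ∈ pathSupport T u r ∧ w ∈ pathSupport T v r

/-- The link `cd` is a shadow of the link `ab`: the tree path between `c` and `d` is a
strict subpath of the tree path between `a` and `b`. -/
def IsShadow {V : Type*} (T : SimpleGraph V) (c d a b : V) : Prop :=
  c ≠ d ∧ pathEdges T c d ⊂ pathEdges T a b

/-- The link set `E` is shadow-closed: every shadow of a link of `E` belongs to `E`. -/
def ShadowClosed {V : Type*} (T : SimpleGraph V) (E : Finset (Sym2 V)) : Prop :=
  ∀ a b c d, s(a, b) ∈ E → IsShadow T c d a b → s(c, d) ∈ E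

/-- `F ⊆ E` is a shadows-minimal feasible solution: it is a minimum-cardinality cover of
`T` among subsets of `E`, and replacing any link of `F` by one of its shadows renders it
infeasible. -/
def ShadowsMinimal {V : Type*} (T : SimpleGraph V) (E F : Finset (Sym2 V)) : Prop :=
  F ⊆ E ∧ CoversTree T ↑F ∧
    (∀ F' : Finset (Sym2 V), F' ⊆ E → CoversTree T ↑F' → F.card ≤ F'.card) ∧
    ∀ a b c d, s(a, b) ∈ F → IsShadow T c d a b →
      ¬ CoversTree T ↑(insert s(c, d) (F.erase s(a, b)))

/-- `deg_F(x)`: the number of links of `F` incident to `x`. -/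
noncomputable def degF {V : Type*} (F : Finset (Sym2 V)) (x : V) : ℕ :=
  (F.filter (fun e => x ∈ e)).card

/-- `s` is a stem with twin link `ab`: an internal vertex whose children are exactly the
two leaves `a` and `b`, with `ab ∈ E`. -/
def IsStem {V : Type*} (T : SimpleGraph V) (r : V) (E : Finset (Sym2 V)) (s a b : V) : Prop :=
  a ≠ b ∧ ¬ IsLeaf T s ∧ IsLeaf T a ∧ IsLeaf T b ∧
    IsParent T r a s ∧ IsParent T r b s ∧
    (∀ x, IsParent T r x s → x = a ∨ x = b) ∧ s(a, b) ∈ E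

/-- The subtree `T_v` is `x`-closed: every link of `E` incident to `x` has both endpoints
in `T_v`. -/
def XClosed {V : Type*} (T : SimpleGraph V) (r : V) (E : Finset (Sym2 V)) (v x : V) : Prop :=
  ∀ l ∈ E, x ∈ l → ∀ y ∈ l, InSubtree T r v y

/-- The subtree `T_v` is leaf-closed: it is `x`-closed for every leaf `x ∈ L_v`. -/
def LeafClosed {V : Type*} (T : SimpleGraph V) (r : V) (E : Finset (Sym2 V)) (v : V) : Prop :=
  ∀ x, IsLeaf T x → InSubtree T r v x → XClosed T r E v x

/-- The subtree `T_v` is minimally leaf-closed: it is leaf-closed and no subtree rooted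
at a strict descendant of `v` is leaf-closed. -/
def MinLeafClosed {V : Type*} (T : SimpleGraph V) (r : V) (E : Finset (Sym2 V)) (v : V) : Prop :=
  LeafClosed T r E v ∧ ∀ u, InSubtree T r v u → u ≠ v → ¬ LeafClosed T r E u

/-- `ax` is an up-link of the leaf `a`: a link of `E` incident to `a` whose least common
ancestor with `a` is closest to the root among all links of `E` incident to `a`. -/
def IsUpLink {V : Type*} (T : SimpleGraph V) (r : V) (E : Finset (Sym2 V)) (a x : V) : Prop :=
  s(a, x) ∈ E ∧ ∀ y w w', s(a, y) ∈ E → IsLCA T r a x w → IsLCA T r a y w' →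
    T.dist w r ≤ T.dist w' r

/-- A matching: a set of links (pairs of distinct vertices) no two of which share an
endpoint. -/
def IsMatching {V : Type*} (M : Finset (Sym2 V)) : Prop :=
  (∀ l ∈ M, ¬ l.IsDiag) ∧ ∀ l ∈ M, ∀ l' ∈ M, l ≠ l' → ∀ x, x ∈ l → x ∉ l'

namespace TAPAux

open SimpleGraph

variable {V : Type*} {T : SimpleGraph V}

/-- The unique path between two vertices of a tree. -/
noncomputable def thePath (hT : T.IsTree) (u v : V) : T.Walk u v :=
  (hT.existsUnique_path u v).choose

lemma thePath_isPath (hT : T.IsTree) (u v : V) : (thePath hT u v).IsPath :=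
  (hT.existsUnique_path u v).choose_spec.1

lemma thePath_canon (hT : T.IsTree) {u v : V} (p : T.Walk u v) (hp : p.IsPath) :
    p = thePath hT u v :=
  (hT.existsUnique_path u v).choose_spec.2 p hp

lemma mem_pathSupport_iff (hT : T.IsTree) {u v w : V} :
    w ∈ pathSupport T u v ↔ w ∈ (thePath hT u v).support := by
  constructor
  · rintro ⟨p, hp, hw⟩; rwa [thePath_canon hT p hp] at hw
  · intro h; exact ⟨_, thePath_isPath hT u v, h⟩

lemma mem_pathEdges_iff (hT : T.IsTree) {u v : V} {e : Sym2 V} :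
    e ∈ pathEdges T u v ↔ e ∈ (thePath hT u v).edges := by
  constructor
  · rintro ⟨p, hp, hw⟩; rwa [thePath_canon hT p hp] at hw
  · intro h; exact ⟨_, thePath_isPath hT u v, h⟩

lemma length_thePath (hT : T.IsTree) (u v : V) :
    (thePath hT u v).length = T.dist u v := by
  refine le_antisymm ?_ (SimpleGraph.dist_le _)
  obtain ⟨W, hW⟩ := (hT.isConnected.preconnected u v).exists_walk_length_eq_dist
  calc (thePath hT u v).length = W.bypass.length := by
        rw [← thePath_canon hT W.bypass W.bypass_isPath]
    _ ≤ W.length := W.length_bypass_le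
    _ = T.dist u v := hW

lemma dist_zero (hT : T.IsTree) {u v : V} (h : T.dist u v = 0) : u = v :=
  (hT.isConnected.dist_eq_zero_iff.mp h)

lemma thePath_split (hT : T.IsTree) {u v w : V} (h : w ∈ (thePath hT u v).support) :
    thePath hT u v = (thePath hT u w).append (thePath hT w v) := by
  have hp := thePath_isPath hT u v
  have h1 := thePath_canon hT _ (hp.takeUntil h)
  have h2 := thePath_canon hT _ (hp.dropUntil h)
  rw [← h1, ← h2, Walk.take_spec]

lemma mem_support_split (hT : T.IsTree) {u v w : V} (h : w ∈ (thePath hT u v).support)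
    (x : V) : x ∈ (thePath hT u v).support ↔
      x ∈ (thePath hT u w).support ∨ x ∈ (thePath hT w v).support := by
  conv_lhs => rw [thePath_split hT h]
  exact Walk.mem_support_append_iff _ _

lemma dist_split (hT : T.IsTree) {u v w : V} (h : w ∈ (thePath hT u v).support) :
    T.dist u v = T.dist u w + T.dist w v := by
  rw [← length_thePath hT, ← length_thePath hT, ← length_thePath hT,
    thePath_split hT h, Walk.length_append]

lemma edges_split_subset (hT : T.IsTree) {u v w : V} (h : w ∈ (thePath hT u v).support)
    {e : Sym2 V} (he : e ∈ (thePath hT u w).edges) : e ∈ (thePath hT u v).edges := by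
  rw [thePath_split hT h, Walk.edges_append, List.mem_append]
  exact Or.inl he

lemma edges_split_subset_right (hT : T.IsTree) {u v w : V}
    (h : w ∈ (thePath hT u v).support)
    {e : Sym2 V} (he : e ∈ (thePath hT w v).edges) : e ∈ (thePath hT u v).edges := by
  rw [thePath_split hT h, Walk.edges_append, List.mem_append]
  exact Or.inr he

lemma mem_support_rev (hT : T.IsTree) {u v x : V} (h : x ∈ (thePath hT u v).support) :
    x ∈ (thePath hT v u).support := by
  rw [← thePath_canon hT (thePath hT u v).reverse ((thePath_isPath hT u v).reverse),
    Walk.support_reverse, List.mem_reverse]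
  exact h

lemma thePath_adj (hT : T.IsTree) {u v : V} (h : T.Adj u v) :
    thePath hT u v = Walk.cons h Walk.nil := by
  refine (thePath_canon hT _ ?_).symm
  simp [Walk.isPath_def, h.ne]

lemma dist_adj (hT : T.IsTree) {u v : V} (h : T.Adj u v) : T.dist u v = 1 := by
  rw [← length_thePath hT, thePath_adj hT h]; rfl

lemma edge_mem_thePath_adj (hT : T.IsTree) {u v : V} (h : T.Adj u v) :
    s(u, v) ∈ (thePath hT u v).edges := by
  rw [thePath_adj hT h]; simp

lemma adj_dichotomy (hT : T.IsTree) (r : V) {x y : V} (h : T.Adj x y) :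
    y ∈ (thePath hT x r).support ∨ x ∈ (thePath hT y r).support := by
  by_cases hy : y ∈ (thePath hT x r).support
  · exact Or.inl hy
  · right
    have hp : (Walk.cons h.symm (thePath hT x r)).IsPath :=
      (thePath_isPath hT x r).cons hy
    rw [← thePath_canon hT _ hp]
    simp [Walk.support_cons]

/-- Existence and uniqueness of the least common ancestor. -/
lemma exists_lca [Fintype V] (hT : T.IsTree) (r a z : V) :
    ∃ m, m ∈ (thePath hT a z).support ∧ m ∈ (thePath hT a r).support ∧
      m ∈ (thePath hT z r).support ∧
      ∀ w, w ∈ (thePath hT a z).support → w ∈ (thePath hT a r).support →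
        w ∈ (thePath hT z r).support → w = m := by
  classical
  set C : Finset V := Finset.univ.filter
    (fun w => w ∈ (thePath hT a r).support ∧ w ∈ (thePath hT z r).support) with hC
  have hCne : C.Nonempty := ⟨r, by simp [hC, Walk.end_mem_support]⟩
  obtain ⟨m, hmC, hmmin⟩ := C.exists_min_image (fun w => T.dist a w) hCne
  rw [hC, Finset.mem_filter] at hmC
  obtain ⟨-, hmar, hmzr⟩ := hmC
  -- key minimality, restated
  have hmin' : ∀ w, w ∈ (thePath hT a r).support → w ∈ (thePath hT z r).support →
      T.dist a m ≤ T.dist a w := by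
    intro w h1 h2
    exact hmmin w (by simp [hC, h1, h2])
  -- membership in the a-z path: construct the path through m
  have hmz : m ∈ (thePath hT z m).support := Walk.end_mem_support _
  have hP : ((thePath hT a m).append (thePath hT m z)).IsPath := by
    rw [Walk.isPath_def, Walk.support_append, List.nodup_append]
    refine ⟨(thePath_isPath hT a m).support_nodup, ?_, ?_⟩
    · exact List.Nodup.of_cons
        (by rw [← Walk.support_eq_cons]; exact (thePath_isPath hT m z).support_nodup)
    · -- disjointness
      intro x hx1 y hx2 hxy
      rw [← hxy] at hx2
      have hx2' : x ∈ (thePath hT m z).support := by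
        rw [Walk.support_eq_cons]; exact List.mem_cons_of_mem _ hx2
      have hxm : x ≠ m := by
        intro hxm
        have hnd := (thePath_isPath hT m z).support_nodup
        rw [Walk.support_eq_cons] at hnd
        exact (List.nodup_cons.mp hnd).1 (hxm ▸ hx2)
      -- x is a common vertex
      have hxar : x ∈ (thePath hT a r).support := by
        rw [mem_support_split hT hmar x]
        exact Or.inl hx1
      have hxzr : x ∈ (thePath hT z r).support := by
        rw [mem_support_split hT hmzr x]
        left
        exact mem_support_rev hT hx2'
      have hle := hmin' x hxar hxzr
      have hsplit := dist_split hT hx1  -- dist a m = dist a x + dist x m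
      have : T.dist x m = 0 := by omega
      exact hxm (dist_zero hT this)
  have hPmem : m ∈ ((thePath hT a m).append (thePath hT m z)).support := by
    rw [Walk.mem_support_append_iff]
    exact Or.inl (Walk.end_mem_support _)
  have hPeq : (thePath hT a m).append (thePath hT m z) = thePath hT a z :=
    thePath_canon hT _ hP
  refine ⟨m, hPeq ▸ hPmem, hmar, hmzr, ?_⟩
  -- uniqueness
  intro w hwaz hwar hwzr
  have hwP : w ∈ ((thePath hT a m).append (thePath hT m z)).support := hPeq ▸ hwaz
  rw [Walk.mem_support_append_iff] at hwP
  rcases hwP with hw1 | hw2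
  · -- w on a→m
    have hle := hmin' w hwar hwzr
    have hsplit := dist_split hT hw1
    have : T.dist w m = 0 := by omega
    exact dist_zero hT this
  · -- w on m→z
    rcases (mem_support_split hT hmar w).mp hwar with hw1 | hw3
    · have hle := hmin' w hwar hwzr
      have hsplit := dist_split hT hw1
      have : T.dist w m = 0 := by omega
      exact dist_zero hT this
    · -- w ∈ thePath m r and w ∈ thePath m z (via z side)
      have hwzm : w ∈ (thePath hT z m).support := mem_support_rev hT hw2
      have e1 := dist_split hT hwzm      -- dist z m = dist z w + dist w m
      have e2 := dist_split hT hw3       -- dist m r = dist m w + dist w r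
      have e3 := dist_split hT hwzr      -- dist z r = dist z w + dist w r
      have e4 := dist_split hT hmzr      -- dist z r = dist z m + dist m r
      have hcomm : T.dist w m = T.dist m w := SimpleGraph.dist_comm ..
      have : T.dist w m = 0 := by omega
      exact (dist_zero hT this)

end TAPAux

section Main

open SimpleGraph TAPAux

variable {V : Type*} [Fintype V] {T : SimpleGraph V}

/-- The least common ancestor function. -/
noncomputable def theLCA (hT : T.IsTree) (r a z : V) : V :=
  (exists_lca hT r a z).choose

lemma theLCA_spec (hT : T.IsTree) (r a z : V) :
    (theLCA hT r a z) ∈ (thePath hT a z).support ∧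
    (theLCA hT r a z) ∈ (thePath hT a r).support ∧
    (theLCA hT r a z) ∈ (thePath hT z r).support ∧
    ∀ w, w ∈ (thePath hT a z).support → w ∈ (thePath hT a r).support →
      w ∈ (thePath hT z r).support → w = theLCA hT r a z :=
  (exists_lca hT r a z).choose_spec

lemma isLCA_iff (hT : T.IsTree) (r a z w : V) :
    IsLCA T r a z w ↔ w = theLCA hT r a z := by
  obtain ⟨h1, h2, h3, h4⟩ := theLCA_spec hT r a z
  constructor
  · rintro ⟨m1, m2, m3⟩
    exact h4 w ((mem_pathSupport_iff hT).mp m1) ((mem_pathSupport_iff hT).mp m2)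
      ((mem_pathSupport_iff hT).mp m3)
  · rintro rfl
    exact ⟨(mem_pathSupport_iff hT).mpr h1, (mem_pathSupport_iff hT).mpr h2,
      (mem_pathSupport_iff hT).mpr h3⟩

end Main


section KeyLemma

open SimpleGraph TAPAux

variable {V : Type*} [Fintype V] {T : SimpleGraph V}

lemma between_aux (hT : T.IsTree) {a d m r : V}
    (hd : d ∈ (thePath hT a r).support) (hm : m ∈ (thePath hT a d).support) :
    d ∈ (thePath hT m r).support := by
  have hmar : m ∈ (thePath hT a r).support := (mem_support_split hT hd m).mpr (Or.inl hm)
  rcases (mem_support_split hT hmar d).mp hd with h1 | h2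
  · have e1 := dist_split hT hm
    have e2 := dist_split hT h1
    have hc : T.dist m d = T.dist d m := SimpleGraph.dist_comm ..
    have h0 : T.dist d m = 0 := by omega
    have : d = m := dist_zero hT h0
    subst this
    exact Walk.start_mem_support _
  · exact h2

lemma key_lemma (hT : T.IsTree) (r : V) (E : Finset (Sym2 V))
    (v : V) (hmin : MinLeafClosed T r E v)
    {d u0 : V} (hadj : T.Adj d u0) (hu0 : u0 ∈ (thePath hT d r).support)
    (hdv : InSubtree T r v d) (hu0v : InSubtree T r v u0) :
    ∃ a z, IsLeaf T a ∧ InSubtree T r v a ∧ IsUpLink T r E a z ∧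
      Covers T s(a, z) s(d, u0) := by
  classical
  have hdv' : v ∈ (thePath hT d r).support := (mem_pathSupport_iff hT).mp hdv
  have hu0v' : v ∈ (thePath hT u0 r).support := (mem_pathSupport_iff hT).mp hu0v
  -- d is a strict descendant of v
  have hne : d ≠ v := by
    rintro rfl
    have e1 := dist_split hT hu0
    have e2 := dist_split hT hu0v'
    have e3 := dist_adj hT hadj
    have e4 := dist_adj hT hadj.symm
    omega
  have hnl : ¬ LeafClosed T r E d := hmin.2 d hdv hne
  unfold LeafClosed XClosed at hnl
  push_neg at hnl
  obtain ⟨a, haleaf, had, l, hlE, hal, z0, hz0l, hz0⟩ := hnl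
  have haz0 : a ≠ z0 := fun h => hz0 (h ▸ had)
  have hlz0 : l = s(a, z0) := ((Sym2.mem_and_mem_iff haz0).mp ⟨hal, hz0l⟩)
  have hz0E : s(a, z0) ∈ E := hlz0 ▸ hlE
  -- choose the up-link endpoint
  set S : Finset V := Finset.univ.filter (fun z => s(a, z) ∈ E) with hS
  have hz0S : z0 ∈ S := by simp [hS, hz0E]
  obtain ⟨zs, hzsS, hzsmin⟩ :=
    S.exists_min_image (fun z => T.dist (theLCA hT r a z) r) ⟨z0, hz0S⟩
  have hzsE : s(a, zs) ∈ E := by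
    rw [hS, Finset.mem_filter] at hzsS; exact hzsS.2
  have hup : IsUpLink T r E a zs := by
    refine ⟨hzsE, fun y w w' hyE hw hw' => ?_⟩
    rw [(isLCA_iff hT r a zs w).mp hw, (isLCA_iff hT r a y w').mp hw']
    exact hzsmin y (by simp [hS, hyE])
  -- notation for the two lcas
  obtain ⟨hm0az, hm0ar, hm0zr, -⟩ := theLCA_spec hT r a z0
  obtain ⟨hmsaz, hmsar, hmszr, -⟩ := theLCA_spec hT r a zs
  set m0 := theLCA hT r a z0
  set ms := theLCA hT r a zs
  have had' : d ∈ (thePath hT a r).support := (mem_pathSupport_iff hT).mp had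
  have hz0' : d ∉ (thePath hT z0 r).support :=
    fun h => hz0 ((mem_pathSupport_iff hT).mpr h)
  -- Step A : dist m0 r < dist d r
  have hnotad : m0 ∉ (thePath hT a d).support := by
    intro h
    exact hz0' ((mem_support_split hT hm0zr d).mpr (Or.inr (between_aux hT had' h)))
  have hm0dr : m0 ∈ (thePath hT d r).support := by
    rcases (mem_support_split hT had' m0).mp hm0ar with h | h
    · exact absurd h hnotad
    · exact h
  have hm0d : m0 ≠ d := by
    rintro rfl
    exact hnotad (Walk.end_mem_support _)
  have hdm0 : T.dist d m0 ≠ 0 := fun h0 => hm0d (dist_zero hT h0).symm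
  have eA := dist_split hT hm0dr
  have hstrict0 : T.dist m0 r < T.dist d r := by omega
  have hle : T.dist ms r ≤ T.dist m0 r := hzsmin z0 hz0S
  have hstrict : T.dist ms r < T.dist d r := lt_of_le_of_lt hle hstrict0
  -- Step B
  have hnotad2 : ms ∉ (thePath hT a d).support := by
    intro h
    have hd2 := between_aux hT had' h
    have e := dist_split hT hd2
    omega
  have hmsdr : ms ∈ (thePath hT d r).support := by
    rcases (mem_support_split hT had' ms).mp hmsar with h | h
    · exact absurd h hnotad2
    · exact h
  have hmsd : ms ≠ d := by
    rintro rfl; omega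
  have hdms : T.dist d ms ≠ 0 := fun h0 => hmsd (dist_zero hT h0).symm
  have eB := dist_split hT hmsdr
  have hdams : d ∈ (thePath hT a ms).support := by
    rcases (mem_support_split hT hmsar d).mp had' with h | h
    · exact h
    · have e := dist_split hT h
      omega
  -- Step C : u0 on the path from d to ms
  have hu0dms : u0 ∈ (thePath hT d ms).support := by
    rcases (mem_support_split hT hmsdr u0).mp hu0 with h | h
    · exact h
    · have e1 := dist_split hT h
      have e2 := dist_split hT hu0
      have e3 := dist_adj hT hadj
      have h0 : T.dist ms u0 = 0 := by omega
      have : ms = u0 := dist_zero hT h0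
      subst this
      exact Walk.end_mem_support _
  -- the edge lies on the path from a to zs
  have he1 : s(d, u0) ∈ (thePath hT d ms).edges :=
    edges_split_subset hT hu0dms (edge_mem_thePath_adj hT hadj)
  have he2 : s(d, u0) ∈ (thePath hT a ms).edges :=
    edges_split_subset_right hT hdams he1
  have he3 : s(d, u0) ∈ (thePath hT a zs).edges :=
    edges_split_subset hT hmsaz he2
  refine ⟨a, zs, haleaf, ?_, hup, a, zs, rfl, (mem_pathEdges_iff hT).mpr he3⟩
  exact (mem_pathSupport_iff hT).mpr ((mem_support_split hT had' v).mpr (Or.inr hdv'))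

end KeyLemma

/-- Cover Claim: if the subtree `T_v` is minimally leaf-closed and every
leaf of `T_v` is incident to some link, then the up-links of the leaves of `T_v` cover
every edge of `T_v`. -/
theorem statement1 {V : Type*} [Fintype V] (T : SimpleGraph V) (hT : T.IsTree) (r : V)
    (hr : ¬ IsLeaf T r) (E : Finset (Sym2 V))
    (hlinks : ∀ l ∈ E, ¬ l.IsDiag)
    (v : V) (hmin : MinLeafClosed T r E v)
    (hinc : ∀ a, IsLeaf T a → InSubtree T r v a → ∃ l ∈ E, a ∈ l) :
    ∀ x y, T.Adj x y → InSubtree T r v x → InSubtree T r v y →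
      ∃ a z, IsLeaf T a ∧ InSubtree T r v a ∧ IsUpLink T r E a z ∧
        Covers T s(a, z) s(x, y) := by
  classical
  intro x y hxy hxv hyv
  rcases TAPAux.adj_dichotomy hT r hxy with hd | hd
  · exact key_lemma hT r E v hmin hxy hd hxv hyv
  · obtain ⟨a, z, h1, h2, h3, h4⟩ := key_lemma hT r E v hmin hxy.symm hd hyv hxv
    refine ⟨a, z, h1, h2, h3, ?_⟩
    rwa [Sym2.eq_swap (a := y) (b := x)] at h4
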